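/- Let A be a symmetric p×p real matrix with eigendecomposition A = U D Uᵀ, where U is orthogonal and D is diagonal; let n > 0 and ρ > 0. Then the matrix Θ* = (1/2) U (D + (D² + (2n/ρ) I)^{1/2}) Uᵀ, where (D² + (2n/ρ)I)^{1/2} is the diagonal matrix of the (positive) square roots of the diagonal entries of D² + (2n/ρ)I, is symmetric positive definite, and it is the unique minimizer over symmetric positive definite p×p matrices Θ of the function Θ ↦ −n log det Θ + ρ ‖Θ − A‖_F², where ‖·‖_F is the Frobenius norm. -/

import Mathlib

open Matrix
open scoped BigOperators


lemma posdef_conj_aux {p : ℕ} {N B : Matrix (Fin p) (Fin p) ℝ}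
    (hinj : ∀ x : Fin p → ℝ, Nᵀ *ᵥ x = 0 → x = 0) (hB : B.PosDef) :
    (N * B * Nᵀ).PosDef := by
  have hBs : Bᵀ = B := by
    have := hB.1
    rwa [Matrix.IsHermitian, conjTranspose_eq_transpose_of_trivial] at this
  rw [Matrix.posDef_iff_dotProduct_mulVec]
  constructor
  · rw [Matrix.IsHermitian, conjTranspose_eq_transpose_of_trivial]
    rw [Matrix.transpose_mul, Matrix.transpose_mul, Matrix.transpose_transpose, hBs,
      Matrix.mul_assoc]
  · intro x hx
    have key : star x ⬝ᵥ (N * B * Nᵀ) *ᵥ x = star (Nᵀ *ᵥ x) ⬝ᵥ B *ᵥ (Nᵀ *ᵥ x) := by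
      simp only [star_trivial, ← Matrix.mulVec_mulVec]
      rw [Matrix.dotProduct_mulVec, ← Matrix.mulVec_transpose]

    rw [key]
    exact hB.dotProduct_mulVec_pos (fun h => hx (hinj x h))

lemma trace_eq_sum_eig {p : ℕ} {C : Matrix (Fin p) (Fin p) ℝ} (hC : C.IsHermitian) :
    C.trace = ∑ i, hC.eigenvalues i := by
  simpa using hC.trace_eq_sum_eigenvalues

lemma log_det_le {p : ℕ} {C : Matrix (Fin p) (Fin p) ℝ} (hC : C.PosDef) :
    Real.log C.det ≤ C.trace - p := by
  have hμ : ∀ i, 0 < hC.1.eigenvalues i := hC.eigenvalues_pos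
  have hdet : C.det = ∏ i, hC.1.eigenvalues i := by simpa using hC.1.det_eq_prod_eigenvalues
  have htr : C.trace = ∑ i, hC.1.eigenvalues i := trace_eq_sum_eig hC.1
  rw [hdet, htr, Real.log_prod (fun i _ => (hμ i).ne')]
  have : ∀ i ∈ Finset.univ, Real.log (hC.1.eigenvalues i) ≤ hC.1.eigenvalues i - 1 :=
    fun i _ => Real.log_le_sub_one_of_pos (hμ i)
  calc ∑ i, Real.log (hC.1.eigenvalues i) ≤ ∑ i, (hC.1.eigenvalues i - 1) :=
        Finset.sum_le_sum this
    _ = (∑ i, hC.1.eigenvalues i) - p := by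
        rw [Finset.sum_sub_distrib]; simp

lemma frob_conj {p : ℕ} {U : Matrix (Fin p) (Fin p) ℝ} (hU₂ : Uᵀ * U = 1)
    (M : Matrix (Fin p) (Fin p) ℝ) :
    ∑ i, ∑ j, ((U * M * Uᵀ) i j)^2 = ∑ i, ∑ j, (M i j)^2 := by
  have key : ∀ X : Matrix (Fin p) (Fin p) ℝ, ∑ i, ∑ j, (X i j)^2 = (Xᵀ * X).trace := by
    intro X
    simp only [Matrix.trace, Matrix.diag, Matrix.mul_apply, Matrix.transpose_apply, sq]
    exact Finset.sum_comm
  rw [key, key]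
  have h1 : (U * M * Uᵀ)ᵀ * (U * M * Uᵀ) = U * (Mᵀ * M) * Uᵀ := by
    calc (U * M * Uᵀ)ᵀ * (U * M * Uᵀ)
        = U * (Mᵀ * ((Uᵀ * U) * (M * Uᵀ))) := by
          simp only [Matrix.transpose_mul, Matrix.transpose_transpose, Matrix.mul_assoc]
      _ = U * (Mᵀ * M) * Uᵀ := by rw [hU₂, one_mul]; simp only [Matrix.mul_assoc]
  rw [h1, Matrix.trace_mul_cycle, hU₂, one_mul]


/-- the Expand operator: for a symmetric p×p matrix A with
eigendecomposition A = U D Uᵀ (U orthogonal, D = diag(d)) and n, ρ > 0, the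
matrix Θ* = (1/2) U (D + (D² + (2n/ρ)I)^{1/2}) Uᵀ is symmetric positive
definite and is the unique minimizer over symmetric positive definite matrices
of Θ ↦ −n log det Θ + ρ ‖Θ − A‖_F². -/
theorem expand_minimizer (p : ℕ) (n ρ : ℝ) (hn : 0 < n) (hρ : 0 < ρ)
    (U : Matrix (Fin p) (Fin p) ℝ) (hU₁ : U * Uᵀ = 1) (hU₂ : Uᵀ * U = 1)
    (d : Fin p → ℝ) (A : Matrix (Fin p) (Fin p) ℝ) (hA : A.IsSymm)
    (hAdecomp : A = U * Matrix.diagonal d * Uᵀ)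
    (Θstar : Matrix (Fin p) (Fin p) ℝ)
    (hΘstar : Θstar = (1 / 2 : ℝ) •
      (U * Matrix.diagonal (fun i => d i + Real.sqrt ((d i) ^ 2 + 2 * n / ρ)) * Uᵀ)) :
    Θstar.IsSymm ∧ Θstar.PosDef ∧
    ∀ Θ : Matrix (Fin p) (Fin p) ℝ, Θ.PosDef → Θ ≠ Θstar →
      -n * Real.log Θstar.det
          + ρ * (∑ i : Fin p, ∑ j : Fin p, (Θstar i j - A i j) ^ 2)
        < -n * Real.log Θ.det
          + ρ * (∑ i : Fin p, ∑ j : Fin p, (Θ i j - A i j) ^ 2) := by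
  have hρ' : ρ ≠ 0 := hρ.ne'
  set s : Fin p → ℝ := fun i => Real.sqrt ((d i)^2 + 2*n/ρ) with hs_def
  set θ : Fin p → ℝ := fun i => (d i + s i)/2 with hθ_def
  have h2nρ : 0 < 2*n/ρ := by positivity
  have hs2 : ∀ i, s i^2 = (d i)^2 + 2*n/ρ := fun i => Real.sq_sqrt (by positivity)
  have hsnn : ∀ i, 0 ≤ s i := fun i => Real.sqrt_nonneg _
  have hθpos : ∀ i, 0 < θ i := by
    intro i
    have h1 := hs2 i; have h2 := hsnn i
    simp only [hθ_def]
    nlinarith [sq_nonneg (s i + d i), sq_nonneg (s i - d i)]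
  have hstat : ∀ i, n = 2*ρ*(θ i)*(θ i - d i) := by
    intro i
    have h1 := hs2 i
    have h2 : (s i^2) * ρ = (d i)^2 * ρ + 2*n := by
      field_simp at h1 ⊢; linarith [h1]
    simp only [hθ_def]
    ring_nf
    nlinarith [h2]
  set Dθ : Matrix (Fin p) (Fin p) ℝ := Matrix.diagonal θ with hDθ_def
  have hΘstar' : Θstar = U * Dθ * Uᵀ := by
    rw [hΘstar]
    have h1 : (1/2:ℝ) • Matrix.diagonal (fun i => d i + Real.sqrt ((d i)^2 + 2*n/ρ)) = Dθ := by
      ext i j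
      by_cases h : i = j
      · subst h; simp [hDθ_def, Matrix.diagonal_apply_eq, hθ_def, hs_def]; ring
      · simp [hDθ_def, Matrix.diagonal_apply_ne _ h]
    rw [← h1, Matrix.mul_smul, Matrix.smul_mul]
  have hDθpos : Dθ.PosDef := Matrix.PosDef.diagonal hθpos
  have hinjU : ∀ x : Fin p → ℝ, Uᵀ *ᵥ x = 0 → x = 0 := by
    intro x h
    calc x = (U * Uᵀ) *ᵥ x := by rw [hU₁, Matrix.one_mulVec]
      _ = U *ᵥ (Uᵀ *ᵥ x) := by rw [Matrix.mulVec_mulVec]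
      _ = 0 := by rw [h, Matrix.mulVec_zero]
  have hinjUT : ∀ x : Fin p → ℝ, Uᵀᵀ *ᵥ x = 0 → x = 0 := by
    intro x h
    rw [Matrix.transpose_transpose] at h
    calc x = (Uᵀ * U) *ᵥ x := by rw [hU₂, Matrix.one_mulVec]
      _ = Uᵀ *ᵥ (U *ᵥ x) := by rw [Matrix.mulVec_mulVec]
      _ = 0 := by rw [h, Matrix.mulVec_zero]
  have hdiagsq : ∀ (f : Fin p → ℝ), ∑ i, ∑ j, (Matrix.diagonal f i j)^2 = ∑ i, (f i)^2 := by
    intro f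
    refine Finset.sum_congr rfl fun i _ => ?_
    rw [Finset.sum_eq_single i]
    · simp
    · intro j _ hj; rw [Matrix.diagonal_apply_ne' _ hj]; simp
    · simp
  refine ⟨?_, ?_, ?_⟩
  · show Θstarᵀ = Θstar
    rw [hΘstar', Matrix.transpose_mul, Matrix.transpose_mul, Matrix.transpose_transpose,
      hDθ_def, Matrix.diagonal_transpose, Matrix.mul_assoc]
  · rw [hΘstar']; exact posdef_conj_aux hinjU hDθpos
  · intro Θ hΘ hne
    set Θ' := Uᵀ * Θ * U with hΘ'def
    have hback : U * Θ' * Uᵀ = Θ := by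
      rw [hΘ'def]
      simp only [Matrix.mul_assoc]
      rw [hU₁, Matrix.mul_one, ← Matrix.mul_assoc, hU₁, Matrix.one_mul]
    have hΘ'pos : Θ'.PosDef := by
      have h := posdef_conj_aux hinjUT hΘ
      rwa [Matrix.transpose_transpose, ← hΘ'def] at h
    have hdetUU : U.det * Uᵀ.det = 1 := by rw [← Matrix.det_mul, hU₁, Matrix.det_one]
    have hdetΘ : Θ.det = Θ'.det := by
      rw [← hback, Matrix.det_mul, Matrix.det_mul]
      linear_combination Θ'.det * hdetUU
    have hdetΘstar : Θstar.det = ∏ i, θ i := by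
      rw [hΘstar', Matrix.det_mul, Matrix.det_mul, hDθ_def, Matrix.det_diagonal]
      linear_combination (∏ i, θ i) * hdetUU
    have hsum1 : ∑ i, ∑ j, (Θstar i j - A i j)^2 = ∑ i, (θ i - d i)^2 := by
      have h1 : Θstar - A = U * (Dθ - Matrix.diagonal d) * Uᵀ := by
        rw [hΘstar', hAdecomp, Matrix.mul_sub, Matrix.sub_mul]
      calc ∑ i, ∑ j, (Θstar i j - A i j)^2
          = ∑ i, ∑ j, ((U * (Dθ - Matrix.diagonal d) * Uᵀ) i j)^2 := by
            simp only [← Matrix.sub_apply, h1]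
        _ = ∑ i, ∑ j, ((Dθ - Matrix.diagonal d) i j)^2 := frob_conj hU₂ _
        _ = ∑ i, (θ i - d i)^2 := by
            rw [hDθ_def, Matrix.diagonal_sub, hdiagsq]
    have hsum2 : ∑ i, ∑ j, (Θ i j - A i j)^2
        = ∑ i, ∑ j, (Θ' i j - Matrix.diagonal d i j)^2 := by
      have h1 : Θ - A = U * (Θ' - Matrix.diagonal d) * Uᵀ := by
        rw [← hback, hAdecomp, Matrix.mul_sub, Matrix.sub_mul]
      calc ∑ i, ∑ j, (Θ i j - A i j)^2
          = ∑ i, ∑ j, ((U * (Θ' - Matrix.diagonal d) * Uᵀ) i j)^2 := by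
            simp only [← Matrix.sub_apply, h1]
        _ = ∑ i, ∑ j, ((Θ' - Matrix.diagonal d) i j)^2 := frob_conj hU₂ _
        _ = ∑ i, ∑ j, (Θ' i j - Matrix.diagonal d i j)^2 := by
            simp only [Matrix.sub_apply]
    -- quadratic expansion
    have hpt : ∀ i j, (Θ' i j - Matrix.diagonal d i j)^2
        = (Θ' i j - Dθ i j)^2
          + (if j = i then 2*(Θ' i i - θ i)*(θ i - d i) + (θ i - d i)^2 else 0) := by
      intro i j
      by_cases h : j = i
      · subst h
        rw [if_pos rfl]
        simp only [hDθ_def, Matrix.diagonal_apply_eq]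
        ring
      · rw [if_neg h, Matrix.diagonal_apply_ne' _ h, hDθ_def, Matrix.diagonal_apply_ne' _ h]
        ring
    have hquad : (∑ i, ∑ j, (Θ' i j - Matrix.diagonal d i j)^2)
        = (∑ i, ∑ j, (Θ' i j - Dθ i j)^2)
          + ((∑ i, 2*(Θ' i i - θ i)*(θ i - d i)) + ∑ i, (θ i - d i)^2) := by
      have step : ∀ i : Fin p, ∑ j, (Θ' i j - Matrix.diagonal d i j)^2
          = (∑ j, (Θ' i j - Dθ i j)^2) + (2*(Θ' i i - θ i)*(θ i - d i) + (θ i - d i)^2) := by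
        intro i
        rw [Finset.sum_congr rfl (fun j _ => hpt i j), Finset.sum_add_distrib]
        congr 1
        rw [Finset.sum_ite_eq' Finset.univ i
          (fun _ => 2*(Θ' i i - θ i)*(θ i - d i) + (θ i - d i)^2)]
        simp
      calc ∑ i, ∑ j, (Θ' i j - Matrix.diagonal d i j)^2
          = ∑ i, ((∑ j, (Θ' i j - Dθ i j)^2) + (2*(Θ' i i - θ i)*(θ i - d i) + (θ i - d i)^2)) :=
            Finset.sum_congr rfl fun i _ => step i
        _ = _ := by simp only [Finset.sum_add_distrib, add_assoc]
    -- strict positivity of the quadratic remainder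
    have hΘ'ne : Θ' ≠ Dθ := by
      intro h
      exact hne (by rw [← hback, h, ← hΘstar'])
    obtain ⟨i₀, j₀, hij⟩ : ∃ i j, Θ' i j ≠ Dθ i j := by
      by_contra h
      push_neg at h
      exact hΘ'ne (by ext i j; exact h i j)
    have hTpos : 0 < ∑ i, ∑ j, (Θ' i j - Dθ i j)^2 := by
      have h1 : 0 < (Θ' i₀ j₀ - Dθ i₀ j₀)^2 := by
        have := sub_ne_zero.mpr hij
        positivity
      have h2 : (Θ' i₀ j₀ - Dθ i₀ j₀)^2 ≤ ∑ j, (Θ' i₀ j - Dθ i₀ j)^2 :=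
        Finset.single_le_sum (f := fun j => (Θ' i₀ j - Dθ i₀ j)^2)
          (fun j _ => sq_nonneg _) (Finset.mem_univ j₀)
      have h3 : ∑ j, (Θ' i₀ j - Dθ i₀ j)^2 ≤ ∑ i, ∑ j, (Θ' i j - Dθ i j)^2 :=
        Finset.single_le_sum (f := fun i => ∑ j, (Θ' i j - Dθ i j)^2)
          (fun i _ => Finset.sum_nonneg fun j _ => sq_nonneg _) (Finset.mem_univ i₀)
      linarith
    -- cross term identity
    have hcross : n * (∑ i, (Θ' i i - θ i)/θ i)
        = 2 * ρ * ∑ i, (Θ' i i - θ i)*(θ i - d i) := by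
      rw [Finset.mul_sum, Finset.mul_sum]
      refine Finset.sum_congr rfl fun i _ => ?_
      have hθi : θ i ≠ 0 := (hθpos i).ne'
      field_simp
      linear_combination (Θ' i i - θ i) * hstat i
    -- log-det inequality
    set r : Fin p → ℝ := fun i => (Real.sqrt (θ i))⁻¹ with hr_def
    have hr2 : ∀ i, r i^2 = (θ i)⁻¹ := by
      intro i
      rw [hr_def]
      rw [inv_pow, Real.sq_sqrt (hθpos i).le]
    have hinjN : ∀ x : Fin p → ℝ, (Matrix.diagonal r)ᵀ *ᵥ x = 0 → x = 0 := by
      intro x h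
      rw [Matrix.diagonal_transpose] at h
      funext i
      have := congrFun h i
      rw [Matrix.mulVec_diagonal] at this
      have hri : r i ≠ 0 := by
        rw [hr_def]
        exact inv_ne_zero (Real.sqrt_ne_zero'.mpr (hθpos i))
      exact (mul_eq_zero.mp this).resolve_left hri
    set C := Matrix.diagonal r * Θ' * (Matrix.diagonal r)ᵀ with hC_def
    have hCpos : C.PosDef := posdef_conj_aux hinjN hΘ'pos
    have hlogle := log_det_le hCpos
    have hprodθpos : 0 < ∏ i, θ i := Finset.prod_pos fun i _ => hθpos i
    have hdetΘ'pos : 0 < Θ'.det := hΘ'pos.det_pos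
    have hdetC : C.det = (∏ i, (θ i)⁻¹) * Θ'.det := by
      rw [hC_def, Matrix.det_mul, Matrix.det_mul, Matrix.diagonal_transpose, Matrix.det_diagonal]
      have hrr : (∏ i, r i) * (∏ i, r i) = ∏ i, (θ i)⁻¹ := by
        rw [← Finset.prod_mul_distrib]
        exact Finset.prod_congr rfl fun i _ => by rw [← sq, hr2]
      linear_combination Θ'.det * hrr
    have htrC : C.trace = ∑ i, Θ' i i * (θ i)⁻¹ := by
      rw [hC_def, Matrix.diagonal_transpose]
      simp only [Matrix.trace, Matrix.diag, Matrix.mul_diagonal, Matrix.diagonal_mul]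
      exact Finset.sum_congr rfl fun i _ => by linear_combination Θ' i i * hr2 i
    have hlogC : Real.log C.det = Real.log Θ'.det - ∑ i, Real.log (θ i) := by
      rw [hdetC,
        Real.log_mul (Finset.prod_pos fun i _ => inv_pos.mpr (hθpos i)).ne' hdetΘ'pos.ne',
        Real.log_prod (fun i _ => (inv_pos.mpr (hθpos i)).ne')]
      have hneg : ∑ i, Real.log (θ i)⁻¹ = - ∑ i, Real.log (θ i) := by
        rw [← Finset.sum_neg_distrib]
        exact Finset.sum_congr rfl fun i _ => Real.log_inv _
      rw [hneg]
      ring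
    have hsumdiv : ∑ i, (Θ' i i - θ i)/θ i = C.trace - p := by
      rw [htrC]
      have hterm : ∀ i : Fin p, (Θ' i i - θ i)/θ i = Θ' i i * (θ i)⁻¹ - 1 := by
        intro i
        have := (hθpos i).ne'
        field_simp
      rw [Finset.sum_congr rfl fun i _ => hterm i, Finset.sum_sub_distrib]
      simp
    have hlog : Real.log Θ'.det ≤ (∑ i, Real.log (θ i)) + ∑ i, (Θ' i i - θ i)/θ i := by
      rw [hsumdiv]
      linarith [hlogle, hlogC]
    have hlogΘstar : Real.log Θstar.det = ∑ i, Real.log (θ i) := by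
      rw [hdetΘstar, Real.log_prod fun i _ => (hθpos i).ne']
    have h2s : (∑ i, 2*(Θ' i i - θ i)*(θ i - d i)) = 2 * ∑ i, (Θ' i i - θ i)*(θ i - d i) := by
      rw [Finset.mul_sum]
      exact Finset.sum_congr rfl fun i _ => by ring
    rw [hsum1, hsum2, hquad, hdetΘ, hlogΘstar, h2s]
    have hmul := mul_le_mul_of_nonneg_left hlog hn.le
    have hρT := mul_pos hρ hTpos
    nlinarith [hmul, hcross, hρT]
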